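/- Let λ, λ' be non-negative integers and ω, ω' ∈ {0, 1}. Define the integer m := Σ_{l=0}^{min(λ,λ')} c_l · (λ + λ' − 2l + 2) − (λ+1)(λ'+1), where c_l := (1 if λ' + ω + ω' + l is odd, else 0) + (1 if λ + ω + ω' + l is odd, else 0). Then: m = min(λ,λ') + 1 if λ ≢ λ' (mod 2); m = 2·min(λ,λ') + 2 if λ and λ' are both odd and ω = ω'; m = 0 if λ and λ' are both odd and ω ≠ ω'; m = −|λ − λ'| − 1 if λ and λ' are both even and ω = ω'; and m = λ + λ' + 3 if λ and λ' are both even and ω ≠ ω'. -/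

import Mathlib

private def S (k n : ℕ) (C : ℤ) : ℤ :=
  ∑ l ∈ Finset.range (n+1), (if Odd (k+l) then (1:ℤ) else 0) * (C - 2*l)

private lemma S_formula (k n : ℕ) (C : ℤ) :
    S k n C = (((n+1+k%2)/2 : ℕ) : ℤ) * C - 2*((((n+1+k%2)/2 : ℕ) : ℤ))^2
      + 2*((k%2 : ℕ) : ℤ)*((((n+1+k%2)/2 : ℕ) : ℤ)) := by
  induction n with
  | zero =>
    simp only [S, Nat.odd_iff]
    rw [Finset.sum_range_one]
    rcases Nat.even_or_odd k with hk | hk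
    · rw [Nat.even_iff] at hk
      have h1 : (0+1+k%2)/2 = 0 := by omega
      rw [if_neg (by omega), h1, hk]; norm_num
    · rw [Nat.odd_iff] at hk
      have h1 : (0+1+k%2)/2 = 1 := by omega
      rw [if_pos (by omega), h1, hk]; push_cast; ring
  | succ n ih =>
    have hstep : S k (n+1) C = S k n C + (if Odd (k+(n+1)) then (1:ℤ) else 0) * (C - 2*((n:ℤ)+1)) := by
      simp only [S, Finset.sum_range_succ]
      push_cast; ring
    rw [hstep, ih]
    simp only [Nat.odd_iff]
    rcases Nat.even_or_odd (k+n+1) with hp | hp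
    · rw [Nat.even_iff] at hp
      have h1 : (n+1+1+k%2)/2 = (n+1+k%2)/2 := by omega
      rw [if_neg (by omega), h1]; ring
    · rw [Nat.odd_iff] at hp
      have h1 : (n+1+1+k%2)/2 = (n+1+k%2)/2 + 1 := by omega
      rw [if_pos (by omega), h1]
      have hc2 : ((((n+1+k%2)/2 : ℕ)) : ℤ) * 2 = (n : ℤ) + ((k%2 : ℕ) : ℤ) := by
        exact_mod_cast congrArg (Nat.cast (R := ℤ)) (by omega : ((n+1+k%2)/2)*2 = n + k%2)
      rw [Nat.cast_add, Nat.cast_one]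
      linear_combination 2 * hc2

theorem comten_identity (lam lam' ω ω' : ℕ) (hω : ω = 0 ∨ ω = 1) (hω' : ω' = 0 ∨ ω' = 1)
    (m : ℤ)
    (hm : m = (∑ l ∈ Finset.range (min lam lam' + 1),
        (((if Odd (lam' + ω + ω' + l) then 1 else 0) +
          (if Odd (lam + ω + ω' + l) then 1 else 0) : ℤ)) *
          ((lam : ℤ) + (lam' : ℤ) - 2 * l + 2)) -
      ((lam : ℤ) + 1) * ((lam' : ℤ) + 1)) :
    (lam % 2 ≠ lam' % 2 → m = (min lam lam' : ℤ) + 1) ∧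
    (Odd lam → Odd lam' → ω = ω' → m = 2 * (min lam lam' : ℤ) + 2) ∧
    (Odd lam → Odd lam' → ω ≠ ω' → m = 0) ∧
    (Even lam → Even lam' → ω = ω' → m = -|(lam : ℤ) - (lam' : ℤ)| - 1) ∧
    (Even lam → Even lam' → ω ≠ ω' → m = (lam : ℤ) + (lam' : ℤ) + 3) := by
  have hm' : m = S (lam' + ω + ω') (min lam lam') ((lam:ℤ)+(lam':ℤ)+2)
      + S (lam + ω + ω') (min lam lam') ((lam:ℤ)+(lam':ℤ)+2)
      - ((lam:ℤ)+1)*((lam':ℤ)+1) := by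
    rw [hm]; unfold S
    rw [← Finset.sum_add_distrib]
    congr 1
    exact Finset.sum_congr rfl fun l _ => by ring
  rw [S_formula, S_formula] at hm'
  clear hm
  refine ⟨?_, ?_, ?_, ?_, ?_⟩
  · -- different parity
    intro hne
    rcases Nat.even_or_odd (ω + ω') with ht | ht
    · have htt : (ω + ω') % 2 = 0 := Nat.even_iff.mp ht
      rcases Nat.even_or_odd lam with hla | hla
      · have hla : lam % 2 = 0 := Nat.even_iff.mp hla
        have r1 : (lam' + ω + ω') % 2 = 1 := by omega
        have r2 : (lam + ω + ω') % 2 = 0 := by omega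
        rw [r1, r2] at hm'
        rcases le_total lam lam' with h | h
        · rw [min_eq_left h] at hm'; rw [min_eq_left (by exact_mod_cast h : (lam:ℤ) ≤ (lam':ℤ))]
          obtain ⟨s, hs⟩ : ∃ s, lam = 2*s := ⟨lam/2, by omega⟩
          subst hs
          have e1 : (2*s+1+1)/2 = s+1 := by omega
          have e2 : (2*s+1+0)/2 = s := by omega
          rw [e1, e2] at hm'
          rw [hm']; push_cast; ring
        · rw [min_eq_right h] at hm'; rw [min_eq_right (by exact_mod_cast h : (lam':ℤ) ≤ (lam:ℤ))]
          obtain ⟨s, hs⟩ : ∃ s, lam' = 2*s+1 := ⟨lam'/2, by omega⟩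
          subst hs
          have e1 : (2*s+1+1+1)/2 = s+1 := by omega
          have e2 : (2*s+1+1+0)/2 = s+1 := by omega
          rw [e1, e2] at hm'
          rw [hm']; push_cast; ring
      · have hla : lam % 2 = 1 := Nat.odd_iff.mp hla
        have r1 : (lam' + ω + ω') % 2 = 0 := by omega
        have r2 : (lam + ω + ω') % 2 = 1 := by omega
        rw [r1, r2] at hm'
        rcases le_total lam lam' with h | h
        · rw [min_eq_left h] at hm'; rw [min_eq_left (by exact_mod_cast h : (lam:ℤ) ≤ (lam':ℤ))]
          obtain ⟨s, hs⟩ : ∃ s, lam = 2*s+1 := ⟨lam/2, by omega⟩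
          subst hs
          have e1 : (2*s+1+1+0)/2 = s+1 := by omega
          have e2 : (2*s+1+1+1)/2 = s+1 := by omega
          rw [e1, e2] at hm'
          rw [hm']; push_cast; ring
        · rw [min_eq_right h] at hm'; rw [min_eq_right (by exact_mod_cast h : (lam':ℤ) ≤ (lam:ℤ))]
          obtain ⟨s, hs⟩ : ∃ s, lam' = 2*s := ⟨lam'/2, by omega⟩
          subst hs
          have e1 : (2*s+1+0)/2 = s := by omega
          have e2 : (2*s+1+1)/2 = s+1 := by omega
          rw [e1, e2] at hm'
          rw [hm']; push_cast; ring
    · have htt : (ω + ω') % 2 = 1 := Nat.odd_iff.mp ht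
      rcases Nat.even_or_odd lam with hla | hla
      · have hla : lam % 2 = 0 := Nat.even_iff.mp hla
        have r1 : (lam' + ω + ω') % 2 = 0 := by omega
        have r2 : (lam + ω + ω') % 2 = 1 := by omega
        rw [r1, r2] at hm'
        rcases le_total lam lam' with h | h
        · rw [min_eq_left h] at hm'; rw [min_eq_left (by exact_mod_cast h : (lam:ℤ) ≤ (lam':ℤ))]
          obtain ⟨s, hs⟩ : ∃ s, lam = 2*s := ⟨lam/2, by omega⟩
          subst hs
          have e1 : (2*s+1+0)/2 = s := by omega
          have e2 : (2*s+1+1)/2 = s+1 := by omega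
          rw [e1, e2] at hm'
          rw [hm']; push_cast; ring
        · rw [min_eq_right h] at hm'; rw [min_eq_right (by exact_mod_cast h : (lam':ℤ) ≤ (lam:ℤ))]
          obtain ⟨s, hs⟩ : ∃ s, lam' = 2*s+1 := ⟨lam'/2, by omega⟩
          subst hs
          have e1 : (2*s+1+1+0)/2 = s+1 := by omega
          have e2 : (2*s+1+1+1)/2 = s+1 := by omega
          rw [e1, e2] at hm'
          rw [hm']; push_cast; ring
      · have hla : lam % 2 = 1 := Nat.odd_iff.mp hla
        have r1 : (lam' + ω + ω') % 2 = 1 := by omega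
        have r2 : (lam + ω + ω') % 2 = 0 := by omega
        rw [r1, r2] at hm'
        rcases le_total lam lam' with h | h
        · rw [min_eq_left h] at hm'; rw [min_eq_left (by exact_mod_cast h : (lam:ℤ) ≤ (lam':ℤ))]
          obtain ⟨s, hs⟩ : ∃ s, lam = 2*s+1 := ⟨lam/2, by omega⟩
          subst hs
          have e1 : (2*s+1+1+1)/2 = s+1 := by omega
          have e2 : (2*s+1+1+0)/2 = s+1 := by omega
          rw [e1, e2] at hm'
          rw [hm']; push_cast; ring
        · rw [min_eq_right h] at hm'; rw [min_eq_right (by exact_mod_cast h : (lam':ℤ) ≤ (lam:ℤ))]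
          obtain ⟨s, hs⟩ : ∃ s, lam' = 2*s := ⟨lam'/2, by omega⟩
          subst hs
          have e1 : (2*s+1+1)/2 = s+1 := by omega
          have e2 : (2*s+1+0)/2 = s := by omega
          rw [e1, e2] at hm'
          rw [hm']; push_cast; ring
  · -- both odd, ω = ω'
    intro ha hb hee
    subst hee
    have hla : lam % 2 = 1 := Nat.odd_iff.mp ha
    have hlb : lam' % 2 = 1 := Nat.odd_iff.mp hb
    have r1 : (lam' + ω + ω) % 2 = 1 := by omega
    have r2 : (lam + ω + ω) % 2 = 1 := by omega
    rw [r1, r2] at hm'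
    rcases le_total lam lam' with h | h
    · rw [min_eq_left h] at hm'; rw [min_eq_left (by exact_mod_cast h : (lam:ℤ) ≤ (lam':ℤ))]
      obtain ⟨s, hs⟩ : ∃ s, lam = 2*s+1 := ⟨lam/2, by omega⟩
      subst hs
      have e1 : (2*s+1+1+1)/2 = s+1 := by omega
      rw [e1] at hm'
      rw [hm']; push_cast; ring
    · rw [min_eq_right h] at hm'; rw [min_eq_right (by exact_mod_cast h : (lam':ℤ) ≤ (lam:ℤ))]
      obtain ⟨s, hs⟩ : ∃ s, lam' = 2*s+1 := ⟨lam'/2, by omega⟩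
      subst hs
      have e1 : (2*s+1+1+1)/2 = s+1 := by omega
      rw [e1] at hm'
      rw [hm']; push_cast; ring
  · -- both odd, ω ≠ ω'
    intro ha hb hne
    have hla : lam % 2 = 1 := Nat.odd_iff.mp ha
    have hlb : lam' % 2 = 1 := Nat.odd_iff.mp hb
    have htt : (ω + ω') % 2 = 1 := by rcases hω with rfl|rfl <;> rcases hω' with rfl|rfl <;> omega
    have r1 : (lam' + ω + ω') % 2 = 0 := by omega
    have r2 : (lam + ω + ω') % 2 = 0 := by omega
    rw [r1, r2] at hm'
    rcases le_total lam lam' with h | h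
    · rw [min_eq_left h] at hm'
      obtain ⟨s, hs⟩ : ∃ s, lam = 2*s+1 := ⟨lam/2, by omega⟩
      subst hs
      have e1 : (2*s+1+1+0)/2 = s+1 := by omega
      rw [e1] at hm'
      rw [hm']; push_cast; ring
    · rw [min_eq_right h] at hm'
      obtain ⟨s, hs⟩ : ∃ s, lam' = 2*s+1 := ⟨lam'/2, by omega⟩
      subst hs
      have e1 : (2*s+1+1+0)/2 = s+1 := by omega
      rw [e1] at hm'
      rw [hm']; push_cast; ring
  · -- both even, ω = ω'
    intro ha hb hee
    subst hee
    have hla : lam % 2 = 0 := Nat.even_iff.mp ha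
    have hlb : lam' % 2 = 0 := Nat.even_iff.mp hb
    have r1 : (lam' + ω + ω) % 2 = 0 := by omega
    have r2 : (lam + ω + ω) % 2 = 0 := by omega
    rw [r1, r2] at hm'
    rcases le_total lam lam' with h | h
    · rw [min_eq_left h] at hm'
      obtain ⟨s, hs⟩ : ∃ s, lam = 2*s := ⟨lam/2, by omega⟩
      subst hs
      have e1 : (2*s+1+0)/2 = s := by omega
      rw [e1] at hm'
      rw [abs_of_nonpos (by omega : ((2*s:ℕ):ℤ) - (lam':ℤ) ≤ 0)]
      rw [hm']; push_cast; ring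
    · rw [min_eq_right h] at hm'
      obtain ⟨s, hs⟩ : ∃ s, lam' = 2*s := ⟨lam'/2, by omega⟩
      subst hs
      have e1 : (2*s+1+0)/2 = s := by omega
      rw [e1] at hm'
      rw [abs_of_nonneg (by omega : (0:ℤ) ≤ (lam:ℤ) - ((2*s:ℕ):ℤ))]
      rw [hm']; push_cast; ring
  · -- both even, ω ≠ ω'
    intro ha hb hne
    have hla : lam % 2 = 0 := Nat.even_iff.mp ha
    have hlb : lam' % 2 = 0 := Nat.even_iff.mp hb
    have htt : (ω + ω') % 2 = 1 := by rcases hω with rfl|rfl <;> rcases hω' with rfl|rfl <;> omega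
    have r1 : (lam' + ω + ω') % 2 = 1 := by omega
    have r2 : (lam + ω + ω') % 2 = 1 := by omega
    rw [r1, r2] at hm'
    rcases le_total lam lam' with h | h
    · rw [min_eq_left h] at hm'
      obtain ⟨s, hs⟩ : ∃ s, lam = 2*s := ⟨lam/2, by omega⟩
      subst hs
      have e1 : (2*s+1+1)/2 = s+1 := by omega
      rw [e1] at hm'
      rw [hm']; push_cast; ring
    · rw [min_eq_right h] at hm'
      obtain ⟨s, hs⟩ : ∃ s, lam' = 2*s := ⟨lam'/2, by omega⟩
      subst hs
      have e1 : (2*s+1+1)/2 = s+1 := by omega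
      rw [e1] at hm'
      rw [hm']; push_cast; ring
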